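/- Let j ≥ 1 and n₁, n₂ ≥ 0 be integers, and set k₁₁ = j + n₁(2j+1), k₁₂ = j + n₂(2j+1), and k = k₁₁ + k₁₂ + 1. Then the Laplacian matrix of the path graph P_k has an eigenvector whose (k₁₁+1)-th entry is zero. -/

import Mathlib

/-- The path graph on `{1, …, k}`: vertex `i` is adjacent to `i + 1`. -/
def pathGraph' (k : ℕ) : SimpleGraph (Fin k) where
  Adj i j := i.val + 1 = j.val ∨ j.val + 1 = i.val
  symm := ⟨fun i j h => Or.symm h⟩
  loopless := ⟨fun i h => by omega⟩

instance (k : ℕ) : DecidableRel (pathGraph' k).Adj :=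
  fun i j => inferInstanceAs (Decidable (i.val + 1 = j.val ∨ j.val + 1 = i.val))

open Real

lemma nbr_mid (k : ℕ) (i : Fin k) (h0 : 0 < i.val) (h1 : i.val + 1 < k) :
    (pathGraph' k).neighborFinset i = {⟨i.val - 1, by omega⟩, ⟨i.val + 1, h1⟩} := by
  ext x
  rw [SimpleGraph.mem_neighborFinset]
  simp [SimpleGraph.mem_neighborFinset, pathGraph', Fin.ext_iff]
  omega

lemma nbr_left (k : ℕ) (i : Fin k) (hk : 2 ≤ k) (h0 : i.val = 0) :
    (pathGraph' k).neighborFinset i = {⟨1, by omega⟩} := by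
  ext x
  rw [SimpleGraph.mem_neighborFinset]
  simp [SimpleGraph.mem_neighborFinset, pathGraph', Fin.ext_iff]
  omega

lemma nbr_right (k : ℕ) (i : Fin k) (hk : 2 ≤ k) (h0 : i.val = k - 1) :
    (pathGraph' k).neighborFinset i = {⟨k - 2, by omega⟩} := by
  ext x
  rw [SimpleGraph.mem_neighborFinset]
  simp [SimpleGraph.mem_neighborFinset, pathGraph', Fin.ext_iff]
  omega

lemma path_eig (k : ℕ) (hk : 3 ≤ k) (w : ℕ → ℝ) (c : ℝ)
    (hrec : ∀ i, i + 2 ≤ k - 1 → w i + w (i + 2) = 2 * c * w (i + 1))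
    (hb0 : w 0 + w 1 = 2 * c * w 0)
    (hbk : w (k - 2) + w (k - 1) = 2 * c * w (k - 1)) :
    ((pathGraph' k).lapMatrix ℝ).mulVec (fun i => w i.val) =
      (2 - 2 * c) • (fun i => w i.val) := by
  funext i
  rw [SimpleGraph.lapMatrix_mulVec_apply]
  rcases Nat.eq_zero_or_pos i.val with h0 | h0
  · rw [SimpleGraph.degree, nbr_left k i (by omega) h0]
    simp only [Finset.card_singleton, Finset.sum_singleton, Pi.smul_apply, smul_eq_mul, h0]
    push_cast
    linarith
  · rcases eq_or_lt_of_le (show i.val + 1 ≤ k from i.isLt) with h1 | h1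
    · have h0' : i.val = k - 1 := by omega
      rw [SimpleGraph.degree, nbr_right k i (by omega) h0']
      simp only [Finset.card_singleton, Finset.sum_singleton, Pi.smul_apply, smul_eq_mul, h0']
      push_cast
      linarith
    · have hne : (⟨i.val - 1, by omega⟩ : Fin k) ≠ ⟨i.val + 1, h1⟩ :=
        by simp only [ne_eq, Fin.mk.injEq]; omega
      rw [SimpleGraph.degree, nbr_mid k i h0 h1, Finset.card_pair hne,
        Finset.sum_pair hne]
      simp only [Pi.smul_apply, smul_eq_mul]
      have := hrec (i.val - 1) (by omega)
      rw [show i.val - 1 + 2 = i.val + 1 from by omega,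
        show i.val - 1 + 1 = i.val from by omega] at this
      push_cast
      linarith

theorem stmt_9 (j n₁ n₂ k₁₁ k₁₂ k : ℕ) (hj : 1 ≤ j)
    (h₁₁ : k₁₁ = j + n₁ * (2 * j + 1)) (h₁₂ : k₁₂ = j + n₂ * (2 * j + 1))
    (hk : k = k₁₁ + k₁₂ + 1) :
    ∃ v : Fin k → ℝ, v ≠ 0 ∧ (∃ μ : ℝ, ((pathGraph' k).lapMatrix ℝ).mulVec v = μ • v) ∧
      v ⟨k₁₁, by omega⟩ = 0 := by
  have hk3 : 3 ≤ k := by omega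
  set m : ℕ := n₁ + n₂ + 1 with hm
  have hkm : k = m * (2 * j + 1) := by rw [hm]; subst hk h₁₁ h₁₂; ring
  set Kr : ℝ := ((2 * j + 1 : ℕ) : ℝ) with hKr
  have hKr3 : (3:ℝ) ≤ Kr := by rw [hKr]; exact_mod_cast (by omega : 3 ≤ 2 * j + 1)
  have hKr0 : (0:ℝ) < Kr := by linarith
  set w : ℕ → ℝ := fun n => Real.cos ((2 * n + 1) * π / (2 * Kr)) with hw
  have key : ∀ x t : ℝ, Real.cos (x - t) + Real.cos (x + t) = 2 * Real.cos t * Real.cos x := by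
    intro x t; rw [Real.cos_sub, Real.cos_add]; ring
  set c : ℝ := Real.cos (π / Kr) with hc
  have hkcast : (k : ℝ) = m * Kr := by rw [hKr, hkm]; push_cast; ring
  have hrec : ∀ i, i + 2 ≤ k - 1 → w i + w (i + 2) = 2 * c * w (i + 1) := by
    intro i _
    have h := key ((2 * ((i:ℝ) + 1) + 1) * π / (2 * Kr)) (π / Kr)
    rw [← hc] at h
    simp only [hw]
    rw [show ((2 * ((i:ℕ):ℝ) + 1) * π / (2 * Kr))
          = (2 * ((i:ℝ) + 1) + 1) * π / (2 * Kr) - π / Kr from by field_simp; ring,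
      show ((2 * (((i+2):ℕ):ℝ) + 1) * π / (2 * Kr))
          = (2 * ((i:ℝ) + 1) + 1) * π / (2 * Kr) + π / Kr from by push_cast; field_simp; ring,
      show ((2 * (((i+1):ℕ):ℝ) + 1) * π / (2 * Kr))
          = (2 * ((i:ℝ) + 1) + 1) * π / (2 * Kr) from by push_cast; ring]
    exact h
  have hb0 : w 0 + w 1 = 2 * c * w 0 := by
    have h := key ((2 * ((0:ℕ):ℝ) + 1) * π / (2 * Kr)) (π / Kr)
    rw [← hc] at h
    rw [show ((2 * ((0:ℕ):ℝ) + 1) * π / (2 * Kr) - π / Kr)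
          = -((2 * ((0:ℕ):ℝ) + 1) * π / (2 * Kr)) from by push_cast; field_simp; ring,
      Real.cos_neg,
      show ((2 * ((0:ℕ):ℝ) + 1) * π / (2 * Kr) + π / Kr)
          = (2 * ((1:ℕ):ℝ) + 1) * π / (2 * Kr) from by push_cast; field_simp; ring] at h
    simp only [hw]
    exact h
  have hsym : ∀ (a : ℕ) (y : ℝ), Real.cos (a * π + y) = Real.cos (a * π - y) := by
    intro a y; rw [Real.cos_add, Real.cos_sub, Real.sin_nat_mul_pi]; ring
  have hbk : w (k - 2) + w (k - 1) = 2 * c * w (k - 1) := by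
    have c2 : ((k - 2 : ℕ) : ℝ) = (k:ℝ) - 2 := by
      rw [Nat.cast_sub (by omega)]; norm_num
    have c1 : ((k - 1 : ℕ) : ℝ) = (k:ℝ) - 1 := by
      rw [Nat.cast_sub (by omega)]; norm_num
    have h := key ((m:ℝ) * π - π / (2 * Kr)) (π / Kr)
    rw [← hc] at h
    rw [show ((m:ℝ) * π - π / (2 * Kr) + π / Kr) = (m:ℝ) * π + π / (2 * Kr) from by
        field_simp; ring,
      hsym m (π / (2 * Kr))] at h
    simp only [hw, c2, c1]
    rw [show ((2 * ((k:ℝ) - 2) + 1) * π / (2 * Kr))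
          = (m:ℝ) * π - π / (2 * Kr) - π / Kr from by rw [hkcast]; field_simp; ring,
      show ((2 * ((k:ℝ) - 1) + 1) * π / (2 * Kr))
          = (m:ℝ) * π - π / (2 * Kr) from by rw [hkcast]; field_simp; ring]
    exact h
  have heig := path_eig k hk3 w c hrec hb0 hbk
  refine ⟨fun i => w i.val, ?_, ⟨2 - 2 * c, heig⟩, ?_⟩
  · intro hzero
    have h0 : w 0 = 0 := congrFun hzero ⟨0, by omega⟩
    have hpos : 0 < w 0 := by
      simp only [hw]
      rw [show ((2 * ((0:ℕ):ℝ) + 1) * π / (2 * Kr)) = π / (2 * Kr) from by norm_num]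
      apply Real.cos_pos_of_mem_Ioo
      have hπ := Real.pi_pos
      have hq : 0 < π / (2 * Kr) := by positivity
      refine Set.mem_Ioo.mpr ⟨by linarith, ?_⟩
      rw [div_lt_div_iff₀ (by linarith) (by norm_num)]
      nlinarith
    linarith
  · simp only [hw]
    have hj0 : (2 * (j:ℝ) + 1) ≠ 0 := by positivity
    rw [show ((2 * ((k₁₁:ℕ):ℝ) + 1) * π / (2 * Kr)) = (n₁:ℝ) * π + π / 2 from by
        rw [hKr, h₁₁]; push_cast; field_simp; ring,
      Real.cos_add, Real.sin_nat_mul_pi, Real.cos_pi_div_two]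
    ring
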